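/- Let m ∈ ℕ, let p_0, …, p_{2^m−1} ∈ [0,1) with ∑_{k=0}^{2^m−1} p_k = 1, let f_k(x) = (x+k)/2^m, and let μ be a Borel probability measure on [0,1] satisfying μ(B) = ∑_{k=0}^{2^m−1} p_k · μ(f_k^{-1}(B)) for every Borel set B ⊆ [0,1], with probability distribution function Φ(x) = μ([0,x]). Then for every l ∈ {0,…,2^m−1} and every x ∈ [0,1], Φ((x+l)/2^m) = ∑_{k=0}^{l−1} p_k + p_l · Φ(x) (with the convention that the empty sum ∑_{k=0}^{−1} p_k equals 0). -/

import Mathlib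

open MeasureTheory

/-- The distribution function `Φ(x) = μ([0,x])` of an invariant measure for
the IFS `f_k(x) = (x+k)/2^m` with probabilities `p_k` satisfies
`Φ((x+l)/2^m) = ∑_{k=0}^{l−1} p_k + p_l Φ(x)` for all `l ∈ {0,…,2^m−1}` and `x ∈ [0,1]`. -/
theorem stmt_15 (m : ℕ) (hm : 1 ≤ m) (p : ℕ → ℝ)
    (hp : ∀ k < 2 ^ m, p k ∈ Set.Ico (0:ℝ) 1)
    (hsum : ∑ k ∈ Finset.range (2 ^ m), p k = 1)
    (μ : Measure ℝ) [IsProbabilityMeasure μ] (hμ : μ (Set.Icc (0:ℝ) 1) = 1)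
    (hinv : ∀ B ⊆ Set.Icc (0:ℝ) 1, MeasurableSet B →
      μ B = ∑ k ∈ Finset.range (2 ^ m),
        ENNReal.ofReal (p k) * μ ((fun x : ℝ => (x + k) / 2 ^ m) ⁻¹' B))
    (Φ : ℝ → ℝ) (hΦ : ∀ x, Φ x = (μ (Set.Icc 0 x)).toReal) :
    ∀ l : ℕ, l < 2 ^ m → ∀ x ∈ Set.Icc (0:ℝ) 1,
      Φ ((x + (l : ℝ)) / 2 ^ m) = (∑ k ∈ Finset.range l, p k) + p l * Φ x := by
  have h2m : (0:ℝ) < 2 ^ m := by positivity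
  have h2m' : (0:ℕ) < 2 ^ m := by positivity
  -- complement of [0,1] is null
  have hcompl : μ (Set.Icc (0:ℝ) 1)ᶜ = 0 := by
    have := measure_compl (measurableSet_Icc (a := (0:ℝ)) (b := 1)) (measure_ne_top μ _)
    rw [hμ, measure_univ] at this
    simpa using this
  -- μ {0} = 0
  have h0 : μ {(0:ℝ)} = 0 := by
    have hB : ({(0:ℝ)} : Set ℝ) ⊆ Set.Icc 0 1 := by
      simp [Set.singleton_subset_iff]
    have heq := hinv {0} hB (measurableSet_singleton 0)
    have hpre : ∀ k : ℕ, (fun x : ℝ => (x + k) / 2 ^ m) ⁻¹' {0} = {(-(k:ℝ))} := by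
      intro k
      ext y
      simp only [Set.mem_preimage, Set.mem_singleton_iff, div_eq_zero_iff]
      constructor
      · rintro (h | h)
        · linarith
        · exact absurd h (by positivity)
      · intro h; left; linarith
    have hsingle : ∀ k ∈ Finset.range (2 ^ m), k ≠ 0 →
        ENNReal.ofReal (p k) * μ ((fun x : ℝ => (x + k) / 2 ^ m) ⁻¹' {0}) = 0 := by
      intro k _ hk
      rw [hpre k]
      have : μ {(-(k:ℝ))} = 0 := by
        apply measure_mono_null _ hcompl
        intro y hy
        simp only [Set.mem_singleton_iff] at hy
        subst hy
        simp only [Set.mem_compl_iff, Set.mem_Icc, not_and_or, not_le]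
        left
        have : (0:ℝ) < k := by exact_mod_cast Nat.pos_of_ne_zero hk
        linarith
      simp [this]
    rw [Finset.sum_eq_single 0 hsingle (by intro h; exact absurd (Finset.mem_range.mpr h2m') h)] at heq
    rw [hpre 0] at heq
    simp only [Nat.cast_zero, neg_zero] at heq
    by_contra hne
    have hp0 : ENNReal.ofReal (p 0) < 1 := ENNReal.ofReal_lt_one.mpr (hp 0 h2m').2
    have : ENNReal.ofReal (p 0) * μ {(0:ℝ)} < 1 * μ {(0:ℝ)} :=
      by rw [mul_comm, mul_comm 1]; exact ENNReal.mul_lt_mul_right hne (measure_ne_top μ _) hp0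
    rw [one_mul, ← heq] at this
    exact lt_irrefl _ this
  intro l hl x hx
  obtain ⟨hx0, hx1⟩ := hx
  set B := Set.Icc (0:ℝ) ((x + l) / 2 ^ m) with hBdef
  have hlR : (l:ℝ) ≤ 2 ^ m - 1 := by
    have : (l:ℝ) + 1 ≤ 2 ^ m := by exact_mod_cast Nat.succ_le_of_lt hl
    linarith
  have hBsub : B ⊆ Set.Icc (0:ℝ) 1 := by
    apply Set.Icc_subset_Icc le_rfl
    rw [div_le_one h2m]
    linarith
  have heq := hinv B hBsub measurableSet_Icc
  have hpre : ∀ k : ℕ, (fun y : ℝ => (y + k) / 2 ^ m) ⁻¹' B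
      = Set.Icc (-(k:ℝ)) (x + l - k) := by
    intro k
    ext y
    simp only [Set.mem_preimage, hBdef, Set.mem_Icc]
    rw [div_le_div_iff_of_pos_right h2m, le_div_iff₀ h2m]
    constructor <;> rintro ⟨h1, h2⟩ <;> constructor <;> linarith
  -- measure of each preimage
  have hlt : ∀ k : ℕ, k < l → μ (Set.Icc (-(k:ℝ)) (x + l - k)) = 1 := by
    intro k hk
    apply le_antisymm prob_le_one
    rw [← hμ]
    apply measure_mono
    apply Set.Icc_subset_Icc
    · simp
    · have : (k:ℝ) + 1 ≤ l := by exact_mod_cast Nat.succ_le_of_lt hk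
      linarith
  have hEq : μ (Set.Icc (-(l:ℝ)) x) = μ (Set.Icc 0 x) := by
    apply le_antisymm
    · calc μ (Set.Icc (-(l:ℝ)) x) ≤ μ (Set.Icc 0 x ∪ (Set.Icc (0:ℝ) 1)ᶜ) := by
            apply measure_mono
            intro y ⟨hy1, hy2⟩
            by_cases hy : 0 ≤ y
            · left; exact ⟨hy, hy2⟩
            · right
              simp only [Set.mem_compl_iff, Set.mem_Icc, not_and_or, not_le]
              left; linarith
        _ ≤ μ (Set.Icc 0 x) + μ (Set.Icc (0:ℝ) 1)ᶜ := measure_union_le _ _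
        _ = μ (Set.Icc 0 x) := by rw [hcompl, add_zero]
    · apply measure_mono
      apply Set.Icc_subset_Icc _ le_rfl
      simp
  have hgt : ∀ k : ℕ, l < k → μ (Set.Icc (-(k:ℝ)) (x + l - k)) = 0 := by
    intro k hk
    have hsub : Set.Icc (-(k:ℝ)) (x + l - k) ⊆ (Set.Icc (0:ℝ) 1)ᶜ ∪ {0} := by
      intro y ⟨hy1, hy2⟩
      have hkl : (l:ℝ) + 1 ≤ k := by exact_mod_cast Nat.succ_le_of_lt hk
      have hy0 : y ≤ 0 := by linarith
      rcases eq_or_lt_of_le hy0 with h | h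
      · right; simp [h]
      · left
        simp only [Set.mem_compl_iff, Set.mem_Icc, not_and_or, not_le]
        left; exact h
    have hle : μ (Set.Icc (-(k:ℝ)) (x + l - k)) ≤ 0 :=
      calc μ (Set.Icc (-(k:ℝ)) (x + l - k)) ≤ μ ((Set.Icc (0:ℝ) 1)ᶜ ∪ {0}) := measure_mono hsub
        _ ≤ μ (Set.Icc (0:ℝ) 1)ᶜ + μ {0} := measure_union_le _ _
        _ = 0 := by rw [hcompl, h0, add_zero]
    exact le_antisymm hle zero_le
  -- now take toReal
  have hfin : ∀ k ∈ Finset.range (2 ^ m),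
      ENNReal.ofReal (p k) * μ ((fun y : ℝ => (y + k) / 2 ^ m) ⁻¹' B) ≠ ⊤ :=
    fun k _ => ENNReal.mul_ne_top ENNReal.ofReal_ne_top (measure_ne_top μ _)
  have hmain : Φ ((x + l) / 2 ^ m) = ∑ k ∈ Finset.range (2 ^ m),
      p k * (μ ((fun y : ℝ => (y + k) / 2 ^ m) ⁻¹' B)).toReal := by
    rw [hΦ, ← hBdef, heq, ENNReal.toReal_sum hfin]
    apply Finset.sum_congr rfl
    intro k hk
    rw [ENNReal.toReal_mul, ENNReal.toReal_ofReal (hp k (Finset.mem_range.mp hk)).1]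
  rw [hmain]
  rw [← Finset.sum_subset (Finset.range_subset_range.mpr (Nat.succ_le_of_lt hl))
    (by
      intro k hk hk'
      rw [hpre k, hgt k (by
        simp only [Finset.mem_range, not_lt] at hk'
        omega)]
      simp)]
  rw [Finset.sum_range_succ]
  congr 1
  · apply Finset.sum_congr rfl
    intro k hk
    rw [hpre k, hlt k (Finset.mem_range.mp hk)]
    simp
  · rw [hpre l]
    have : x + (l:ℝ) - l = x := by ring
    rw [this, hEq, hΦ]
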